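/- Let K ∈ L²(ℝ^d × ℝ^d) and define the operator L_K on L²(ℝ^d) by (F(L_K f))(λ) = ∫ K(λ, λ₁)(F f)(λ₁) dλ₁. Let b̲, b̲' ∈ ℝ^d determine anisotropic Sobolev norms ‖f‖_{H^{b̲}}² = ∫ ⟨λ⟩_{b̲}² |F f(λ)|² dλ with ⟨λ⟩_{b̲} = (∑_i |λ_i|^{2b_i})^{1/2}. Then ‖L_K‖_{H^{b̲} → H^{b̲'}} ≤ P^{1/4}, where P := ∫∫ ⟨λ₁⟩_{b̲}^{-2} ⟨λ₁'⟩_{b̲}^{-2} |∫ ⟨λ⟩_{b̲'}² K(λ,λ₁) conj(K(λ,λ₁')) dλ|² dλ₁ dλ₁'. -/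

import Mathlib

open MeasureTheory Real ENNReal

/-- Anisotropic Japanese bracket `⟨λ⟩_{b̲} = (∑_i |λ_i|^{2 b_i})^{1/2}` on `ℝ^d`. -/
noncomputable def jbv {d : ℕ} (b : Fin d → ℝ) (l : Fin d → ℝ) : ℝ :=
  Real.sqrt (∑ i, |l i| ^ (2 * b i))

lemma jbv_nonneg {d : ℕ} (b l : Fin d → ℝ) : 0 ≤ jbv b l := Real.sqrt_nonneg _

lemma jbv_measurable {d : ℕ} (b : Fin d → ℝ) : Measurable (jbv b) := by
  apply Measurable.sqrt
  refine Finset.measurable_sum _ fun i _ => ?_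
  fun_prop

lemma jbv_ae_ne {d : ℕ} (hd : d ≠ 0) (b : Fin d → ℝ) :
    ∀ᵐ l : Fin d → ℝ, jbv b l ≠ 0 := by
  by_cases hb : ∃ i, b i = 0
  · obtain ⟨i, hi⟩ := hb
    refine Filter.Eventually.of_forall fun l => ?_
    have h0 : |l i| ^ (2 * b i) = 1 := by rw [hi, mul_zero, Real.rpow_zero]
    have h1 : (1:ℝ) ≤ ∑ j, |l j| ^ (2 * b j) := by
      calc (1:ℝ) = |l i| ^ (2 * b i) := h0.symm
        _ ≤ ∑ j, |l j| ^ (2 * b j) :=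
          Finset.single_le_sum (f := fun j => |l j| ^ (2 * b j))
            (fun j _ => Real.rpow_nonneg (abs_nonneg _) _) (Finset.mem_univ i)
    exact ne_of_gt (Real.sqrt_pos.mpr (lt_of_lt_of_le one_pos h1))
  · push_neg at hb
    obtain ⟨i⟩ := Fin.pos_iff_nonempty.mp (Nat.pos_of_ne_zero hd)
    have hnull : (volume : Measure (Fin d → ℝ)) {l | l i = 0} = 0 := by
      have hset : {l : Fin d → ℝ | l i = 0}
          = Set.pi Set.univ (fun j => if j = i then ({0} : Set ℝ) else Set.univ) := by
        ext l
        simp only [Set.mem_setOf_eq, Set.mem_pi, Set.mem_univ, true_implies]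
        constructor
        · intro h j
          by_cases hj : j = i <;> simp [hj, h]
        · intro h
          simpa using h i
      rw [hset, volume_pi, Measure.pi_pi]
      exact Finset.prod_eq_zero (Finset.mem_univ i) (by simp)
    have hae : ∀ᵐ l : Fin d → ℝ, l i ≠ 0 := by
      rw [MeasureTheory.ae_iff]
      simpa using hnull
    filter_upwards [hae] with l hl
    have hpos : 0 < |l i| ^ (2 * b i) := Real.rpow_pos_of_pos (abs_pos.mpr hl) _
    have h1 : 0 < ∑ j, |l j| ^ (2 * b j) :=
      lt_of_lt_of_le hpos
        (Finset.single_le_sum (f := fun j => |l j| ^ (2 * b j))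
          (fun j _ => Real.rpow_nonneg (abs_nonneg _) _) (Finset.mem_univ i))
    exact ne_of_gt (Real.sqrt_pos.mpr h1)

/-- the operator `L_K` defined in Fourier variables by
`(F L_K f)(λ) = ∫ K(λ,λ₁) (F f)(λ₁) dλ₁` satisfies
`‖L_K‖_{H^{b̲} → H^{b̲'}} ≤ P^{1/4}`, i.e. for every (Fourier transform of a) function `g`,
`∫ ⟨λ⟩²_{b̲'} ‖∫ K(λ,λ₁) g(λ₁) dλ₁‖² dλ ≤ √P · ∫ ⟨λ₁⟩²_{b̲} ‖g(λ₁)‖² dλ₁`. -/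
theorem stmt12 (d : ℕ) (K : (Fin d → ℝ) → (Fin d → ℝ) → ℂ)
    (b b' : Fin d → ℝ)
    (hK : Measurable (Function.uncurry K))
    (hK2 : MemLp (Function.uncurry K) 2 volume)
    (g : (Fin d → ℝ) → ℂ) (hgm : Measurable g)
    (hg : Integrable (fun l₁ => jbv b l₁ ^ 2 * ‖g l₁‖ ^ 2))
    (hKg : ∀ l, Integrable (fun l₁ => K l l₁ * g l₁))
    (hL : Integrable (fun l => jbv b' l ^ 2 * ‖∫ l₁, K l l₁ * g l₁‖ ^ 2))
    (hFub : Integrable (fun q : (Fin d → ℝ) × (Fin d → ℝ) × (Fin d → ℝ) =>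
      jbv b' q.1 ^ 2 *
        ‖K q.1 q.2.1 * g q.2.1 * (starRingEnd ℂ) (K q.1 q.2.2 * g q.2.2)‖))
    (hP : Integrable (fun p : (Fin d → ℝ) × (Fin d → ℝ) =>
      (jbv b p.1 ^ 2)⁻¹ * (jbv b p.2 ^ 2)⁻¹ *
        ‖∫ l, ((jbv b' l ^ 2 : ℝ) : ℂ) * (K l p.1 * (starRingEnd ℂ) (K l p.2))‖ ^ 2)) :
    (∫ l, jbv b' l ^ 2 * ‖∫ l₁, K l l₁ * g l₁‖ ^ 2)
      ≤ Real.sqrt (∫ l₁, ∫ l₁',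
            (jbv b l₁ ^ 2)⁻¹ * (jbv b l₁' ^ 2)⁻¹ *
              ‖∫ l, ((jbv b' l ^ 2 : ℝ) : ℂ) * (K l l₁ * (starRingEnd ℂ) (K l l₁'))‖ ^ 2)
          * ∫ l₁, jbv b l₁ ^ 2 * ‖g l₁‖ ^ 2 := by
  by_cases hd : d = 0
  · subst hd
    simp [jbv]
  -- abbreviations
  set I : (Fin d → ℝ) → ℂ := fun l => ∫ l₁, K l l₁ * g l₁ with hI
  set M : (Fin d → ℝ) × (Fin d → ℝ) → ℂ :=
    fun p => ∫ l, ((jbv b' l ^ 2 : ℝ) : ℂ) * (K l p.1 * (starRingEnd ℂ) (K l p.2)) with hM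
  set G : (Fin d → ℝ) × (Fin d → ℝ) × (Fin d → ℝ) → ℂ := fun q =>
    ((jbv b' q.1 ^ 2 : ℝ) : ℂ) *
      (K q.1 q.2.1 * g q.2.1 * (starRingEnd ℂ) (K q.1 q.2.2 * g q.2.2)) with hG
  set C : (Fin d → ℝ) → ℂ :=
    fun l => ((jbv b' l ^ 2 : ℝ) : ℂ) * (I l * (starRingEnd ℂ) (I l)) with hC
  -- measurability
  have hjm : Measurable fun l : Fin d → ℝ => jbv b' l ^ 2 := (jbv_measurable b').pow_const 2
  have hIm : StronglyMeasurable I := by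
    have : Measurable (Function.uncurry fun l l₁ : Fin d → ℝ => K l l₁ * g l₁) :=
      hK.mul (hgm.comp measurable_snd)
    exact this.stronglyMeasurable.integral_prod_right'
  have hMm : StronglyMeasurable M := by
    have hm : Measurable fun q : (Fin d → ℝ) × ((Fin d → ℝ) × (Fin d → ℝ)) =>
        ((jbv b' q.1 ^ 2 : ℝ) : ℂ) * (K q.1 q.2.1 * (starRingEnd ℂ) (K q.1 q.2.2)) := by
      refine (Complex.measurable_ofReal.comp (hjm.comp measurable_fst)).mul (Measurable.mul ?_ ?_)
      · exact hK.comp (measurable_fst.prodMk (measurable_fst.comp measurable_snd))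
      · exact Complex.continuous_conj.measurable.comp
          (hK.comp (measurable_fst.prodMk (measurable_snd.comp measurable_snd)))
    exact hm.stronglyMeasurable.integral_prod_left'
  have hGm : Measurable G := by
    refine (Complex.measurable_ofReal.comp (hjm.comp measurable_fst)).mul (Measurable.mul ?_ ?_)
    · exact (hK.comp (measurable_fst.prodMk (measurable_fst.comp measurable_snd))).mul
        (hgm.comp (measurable_fst.comp measurable_snd))
    · exact Complex.continuous_conj.measurable.comp
        ((hK.comp (measurable_fst.prodMk (measurable_snd.comp measurable_snd))).mul
          (hgm.comp (measurable_snd.comp measurable_snd)))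
  -- integrability of G
  have hGnorm : ∀ q : (Fin d → ℝ) × (Fin d → ℝ) × (Fin d → ℝ),
      ‖G q‖ = jbv b' q.1 ^ 2 *
        ‖K q.1 q.2.1 * g q.2.1 * (starRingEnd ℂ) (K q.1 q.2.2 * g q.2.2)‖ := by
    intro q
    simp only [hG, norm_mul, Complex.norm_real, Real.norm_of_nonneg (sq_nonneg (jbv b' q.1))]
  have hGint : Integrable G volume := by
    refine (integrable_norm_iff hGm.aestronglyMeasurable).mp ?_
    exact hFub.congr (Filter.Eventually.of_forall fun q => (hGnorm q).symm)
  have hGint' : Integrable G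
      ((volume : Measure (Fin d → ℝ)).prod
        ((volume : Measure (Fin d → ℝ)).prod (volume : Measure (Fin d → ℝ)))) := by
    rwa [← Measure.volume_eq_prod, ← Measure.volume_eq_prod]
  -- integrability of C
  have hCint : Integrable C volume := by
    have hCm : Measurable C := by
      refine (Complex.measurable_ofReal.comp hjm).mul
        (hIm.measurable.mul (Complex.continuous_conj.measurable.comp hIm.measurable))
    refine (integrable_norm_iff hCm.aestronglyMeasurable).mp ?_
    refine hL.congr (Filter.Eventually.of_forall fun l => ?_)
    simp only [hC, norm_mul, Complex.norm_real, Real.norm_of_nonneg (sq_nonneg (jbv b' l)),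
      RCLike.norm_conj]
    ring
  -- Step 1 : LHS = re (∫ C)
  have key1 : (∫ l, jbv b' l ^ 2 * ‖I l‖ ^ 2) = (∫ l, C l).re := by
    have hre := integral_re (𝕜 := ℂ) hCint
    simp only [RCLike.re_to_complex] at hre
    rw [← hre]
    refine integral_congr_ae (Filter.Eventually.of_forall fun l => ?_)
    simp only [hC]
    rw [Complex.mul_conj, ← Complex.ofReal_mul, Complex.normSq_eq_norm_sq, Complex.ofReal_re]
  -- Step 2 : C l as an integral over the product
  have key2 : ∀ l, C l = ∫ p, G (l, p)
      ∂((volume : Measure (Fin d → ℝ)).prod (volume : Measure (Fin d → ℝ))) := by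
    intro l
    have h1 : I l * (starRingEnd ℂ) (I l)
        = ∫ p : (Fin d → ℝ) × (Fin d → ℝ),
            (K l p.1 * g p.1) * (starRingEnd ℂ) (K l p.2 * g p.2)
          ∂((volume : Measure (Fin d → ℝ)).prod (volume : Measure (Fin d → ℝ))) := by
      rw [integral_prod_mul (f := fun l₁ => K l l₁ * g l₁)
        (g := fun l₁ => (starRingEnd ℂ) (K l l₁ * g l₁)), integral_conj]
    simp only [hC]
    rw [h1, ← integral_const_mul]
  -- Step 3 : Fubini
  have key3 : (∫ l, C l) = ∫ p, (∫ l, G (l, p))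
      ∂((volume : Measure (Fin d → ℝ)).prod (volume : Measure (Fin d → ℝ))) := by
    rw [integral_congr_ae (Filter.Eventually.of_forall key2)]
    exact MeasureTheory.integral_integral_swap (f := fun l p => G (l, p)) hGint'
  -- Step 4 : inner integral
  have key4 : ∀ p : (Fin d → ℝ) × (Fin d → ℝ),
      (∫ l, G (l, p)) = g p.1 * (starRingEnd ℂ) (g p.2) * M p := by
    intro p
    calc (∫ l, G (l, p))
        = ∫ l, (g p.1 * (starRingEnd ℂ) (g p.2)) *
            (((jbv b' l ^ 2 : ℝ) : ℂ) * (K l p.1 * (starRingEnd ℂ) (K l p.2))) := by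
          refine integral_congr_ae (Filter.Eventually.of_forall fun l => ?_)
          simp only [hG, map_mul]
          ring
      _ = g p.1 * (starRingEnd ℂ) (g p.2) * M p := by
          rw [integral_const_mul, hM]
  set S : ℂ := ∫ p, g p.1 * (starRingEnd ℂ) (g p.2) * M p
    ∂((volume : Measure (Fin d → ℝ)).prod (volume : Measure (Fin d → ℝ))) with hS
  have keyS : (∫ l, jbv b' l ^ 2 * ‖I l‖ ^ 2) = S.re := by
    rw [key1, key3, integral_congr_ae (Filter.Eventually.of_forall key4)]
  -- Step 5 : bound by the integral of norms
  have h5 : S.re ≤ ‖S‖ := Complex.re_le_norm S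
  have h6 : ‖S‖ ≤ ∫ p, ‖g p.1‖ * ‖g p.2‖ * ‖M p‖
      ∂((volume : Measure (Fin d → ℝ)).prod (volume : Measure (Fin d → ℝ))) := by
    refine (norm_integral_le_integral_norm _).trans_eq ?_
    refine integral_congr_ae (Filter.Eventually.of_forall fun p => ?_)
    simp [norm_mul, RCLike.norm_conj]
  -- a.e. positivity
  have haeb : ∀ᵐ p : (Fin d → ℝ) × (Fin d → ℝ)
      ∂((volume : Measure (Fin d → ℝ)).prod (volume : Measure (Fin d → ℝ))),
      jbv b p.1 ≠ 0 ∧ jbv b p.2 ≠ 0 := by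
    have hZ0 : (volume : Measure (Fin d → ℝ)) {x | jbv b x = 0} = 0 := by
      have := jbv_ae_ne hd b
      rw [MeasureTheory.ae_iff] at this
      simpa using this
    have h1 : ((volume : Measure (Fin d → ℝ)).prod (volume : Measure (Fin d → ℝ)))
        {p : (Fin d → ℝ) × (Fin d → ℝ) | jbv b p.1 = 0} = 0 := by
      have hset : {p : (Fin d → ℝ) × (Fin d → ℝ) | jbv b p.1 = 0}
          = {x | jbv b x = 0} ×ˢ (Set.univ : Set (Fin d → ℝ)) := by
        ext p; simp [Set.mem_prod]
      rw [hset, Measure.prod_prod, hZ0, zero_mul]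
    have h2 : ((volume : Measure (Fin d → ℝ)).prod (volume : Measure (Fin d → ℝ)))
        {p : (Fin d → ℝ) × (Fin d → ℝ) | jbv b p.2 = 0} = 0 := by
      have hset : {p : (Fin d → ℝ) × (Fin d → ℝ) | jbv b p.2 = 0}
          = (Set.univ : Set (Fin d → ℝ)) ×ˢ {x | jbv b x = 0} := by
        ext p; simp [Set.mem_prod]
      rw [hset, Measure.prod_prod, hZ0, mul_zero]
    rw [MeasureTheory.ae_iff]
    refine measure_mono_null ?_ (measure_union_null h1 h2)
    intro p hp
    simp only [Set.mem_setOf_eq, not_and_or, not_not] at hp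
    rcases hp with hp | hp
    · exact Or.inl hp
    · exact Or.inr hp
  -- Cauchy-Schwarz data
  set u : (Fin d → ℝ) × (Fin d → ℝ) → ℝ :=
    fun p => (jbv b p.1 * ‖g p.1‖) * (jbv b p.2 * ‖g p.2‖) with hu
  set v : (Fin d → ℝ) × (Fin d → ℝ) → ℝ :=
    fun p => ((jbv b p.1)⁻¹ * (jbv b p.2)⁻¹) * ‖M p‖ with hv
  have h7 : (∫ p, ‖g p.1‖ * ‖g p.2‖ * ‖M p‖
      ∂((volume : Measure (Fin d → ℝ)).prod (volume : Measure (Fin d → ℝ))))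
      = ∫ p, u p * v p
      ∂((volume : Measure (Fin d → ℝ)).prod (volume : Measure (Fin d → ℝ))) := by
    refine integral_congr_ae ?_
    filter_upwards [haeb] with p hp
    obtain ⟨h1, h2⟩ := hp
    simp only [hu, hv]
    field_simp
  have hum : Measurable u := by
    refine Measurable.mul (Measurable.mul ?_ ?_) (Measurable.mul ?_ ?_)
    · exact (jbv_measurable b).comp measurable_fst
    · exact (hgm.comp measurable_fst).norm
    · exact (jbv_measurable b).comp measurable_snd
    · exact (hgm.comp measurable_snd).norm
  have hvm : Measurable v := by
    refine Measurable.mul (Measurable.mul ?_ ?_) ?_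
    · exact ((jbv_measurable b).comp measurable_fst).inv
    · exact ((jbv_measurable b).comp measurable_snd).inv
    · exact hMm.measurable.norm
  have h8 : MemLp u (ENNReal.ofReal 2)
      ((volume : Measure (Fin d → ℝ)).prod (volume : Measure (Fin d → ℝ))) := by
    rw [ENNReal.ofReal_ofNat]
    refine (memLp_two_iff_integrable_sq hum.aestronglyMeasurable).mpr ?_
    have hint : Integrable (fun p : (Fin d → ℝ) × (Fin d → ℝ) =>
        (jbv b p.1 ^ 2 * ‖g p.1‖ ^ 2) * (jbv b p.2 ^ 2 * ‖g p.2‖ ^ 2))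
        ((volume : Measure (Fin d → ℝ)).prod (volume : Measure (Fin d → ℝ))) :=
      hg.mul_prod hg
    refine hint.congr (Filter.Eventually.of_forall fun p => ?_)
    simp only [hu]
    ring
  have hP' : Integrable (fun p : (Fin d → ℝ) × (Fin d → ℝ) =>
      (jbv b p.1 ^ 2)⁻¹ * (jbv b p.2 ^ 2)⁻¹ * ‖M p‖ ^ 2)
      ((volume : Measure (Fin d → ℝ)).prod (volume : Measure (Fin d → ℝ))) := by
    rw [← Measure.volume_eq_prod]
    exact hP
  have h9 : MemLp v (ENNReal.ofReal 2)
      ((volume : Measure (Fin d → ℝ)).prod (volume : Measure (Fin d → ℝ))) := by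
    rw [ENNReal.ofReal_ofNat]
    refine (memLp_two_iff_integrable_sq hvm.aestronglyMeasurable).mpr ?_
    refine hP'.congr (Filter.Eventually.of_forall fun p => ?_)
    simp only [hv]
    rw [mul_pow, mul_pow, inv_pow, inv_pow]
  have hCS : (∫ p, u p * v p
      ∂((volume : Measure (Fin d → ℝ)).prod (volume : Measure (Fin d → ℝ))))
      ≤ (∫ p, u p ^ (2:ℝ)
          ∂((volume : Measure (Fin d → ℝ)).prod (volume : Measure (Fin d → ℝ)))) ^ ((1:ℝ)/2)
        * (∫ p, v p ^ (2:ℝ)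
          ∂((volume : Measure (Fin d → ℝ)).prod (volume : Measure (Fin d → ℝ)))) ^ ((1:ℝ)/2) := by
    refine integral_mul_le_Lp_mul_Lq_of_nonneg ⟨by norm_num, by norm_num, by norm_num⟩ ?_ ?_ h8 h9
    · refine Filter.Eventually.of_forall fun p => ?_
      simp only [hu]
      exact mul_nonneg (mul_nonneg (jbv_nonneg b p.1) (norm_nonneg _))
        (mul_nonneg (jbv_nonneg b p.2) (norm_nonneg _))
    · refine Filter.Eventually.of_forall fun p => ?_
      simp only [hv]
      exact mul_nonneg (mul_nonneg (inv_nonneg.mpr (jbv_nonneg b p.1))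
        (inv_nonneg.mpr (jbv_nonneg b p.2))) (norm_nonneg _)
  -- identify the two factors
  have hrw2 : ∀ x : ℝ, x ^ (2:ℝ) = x ^ (2:ℕ) := fun x => by
    rw [show ((2:ℝ)) = ((2:ℕ):ℝ) by norm_num, Real.rpow_natCast]
  have hu2 : (∫ p, u p ^ (2:ℝ)
      ∂((volume : Measure (Fin d → ℝ)).prod (volume : Measure (Fin d → ℝ))))
      = (∫ x, jbv b x ^ 2 * ‖g x‖ ^ 2) ^ 2 := by
    have : (∫ p, u p ^ (2:ℝ)
        ∂((volume : Measure (Fin d → ℝ)).prod (volume : Measure (Fin d → ℝ))))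
        = ∫ p : (Fin d → ℝ) × (Fin d → ℝ),
            (jbv b p.1 ^ 2 * ‖g p.1‖ ^ 2) * (jbv b p.2 ^ 2 * ‖g p.2‖ ^ 2)
          ∂((volume : Measure (Fin d → ℝ)).prod (volume : Measure (Fin d → ℝ))) := by
      refine integral_congr_ae (Filter.Eventually.of_forall fun p => ?_)
      simp only [hrw2, hu]
      ring
    rw [this, integral_prod_mul (f := fun x => jbv b x ^ 2 * ‖g x‖ ^ 2)
      (g := fun x => jbv b x ^ 2 * ‖g x‖ ^ 2), sq]
  have hv2 : (∫ p, v p ^ (2:ℝ)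
      ∂((volume : Measure (Fin d → ℝ)).prod (volume : Measure (Fin d → ℝ))))
      = ∫ l₁, ∫ l₁',
          (jbv b l₁ ^ 2)⁻¹ * (jbv b l₁' ^ 2)⁻¹ *
            ‖∫ l, ((jbv b' l ^ 2 : ℝ) : ℂ) * (K l l₁ * (starRingEnd ℂ) (K l l₁'))‖ ^ 2 := by
    have h1 : (∫ p, v p ^ (2:ℝ)
        ∂((volume : Measure (Fin d → ℝ)).prod (volume : Measure (Fin d → ℝ))))
        = ∫ p : (Fin d → ℝ) × (Fin d → ℝ),
            (jbv b p.1 ^ 2)⁻¹ * (jbv b p.2 ^ 2)⁻¹ * ‖M p‖ ^ 2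
          ∂((volume : Measure (Fin d → ℝ)).prod (volume : Measure (Fin d → ℝ))) := by
      refine integral_congr_ae (Filter.Eventually.of_forall fun p => ?_)
      simp only [hrw2, hv]
      rw [mul_pow, mul_pow, inv_pow, inv_pow]
    rw [h1, MeasureTheory.integral_prod _ hP']
  -- nonnegativity of the B factor
  have hBnn : 0 ≤ ∫ x, jbv b x ^ 2 * ‖g x‖ ^ 2 :=
    integral_nonneg fun x => mul_nonneg (sq_nonneg _) (sq_nonneg _)
  -- final assembly
  have final : (∫ l, jbv b' l ^ 2 * ‖I l‖ ^ 2)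
      ≤ (∫ x, jbv b x ^ 2 * ‖g x‖ ^ 2) *
        Real.sqrt (∫ l₁, ∫ l₁',
          (jbv b l₁ ^ 2)⁻¹ * (jbv b l₁' ^ 2)⁻¹ *
            ‖∫ l, ((jbv b' l ^ 2 : ℝ) : ℂ) * (K l l₁ * (starRingEnd ℂ) (K l l₁'))‖ ^ 2) := by
    rw [keyS]
    refine h5.trans (h6.trans ?_)
    rw [h7]
    refine hCS.trans ?_
    rw [← Real.sqrt_eq_rpow, ← Real.sqrt_eq_rpow, hu2, hv2, Real.sqrt_sq hBnn]
  calc (∫ l, jbv b' l ^ 2 * ‖I l‖ ^ 2)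
      ≤ (∫ x, jbv b x ^ 2 * ‖g x‖ ^ 2) *
        Real.sqrt (∫ l₁, ∫ l₁',
          (jbv b l₁ ^ 2)⁻¹ * (jbv b l₁' ^ 2)⁻¹ *
            ‖∫ l, ((jbv b' l ^ 2 : ℝ) : ℂ) * (K l l₁ * (starRingEnd ℂ) (K l l₁'))‖ ^ 2) := final
    _ = _ := mul_comm _ _
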